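/- The Generalized Matching Pennies prototype has uniform capacities: let K ≥ 1, N = 2K, M > 0, let A* be the N×N block-diagonal matrix with K diagonal 2×2 blocks of all M's, and B* = -A*. Then in every Nash equilibrium (x,y) of (A*,B*), for every k ∈ {1,...,K}: x_{2k-1} + x_{2k} = 1/K and y_{2k-1} + y_{2k} = 1/K. -/

import Mathlib

/-- The expected payoff `xᵀ A y`. -/
def pay {N : ℕ} (A : Matrix (Fin N) (Fin N) ℝ) (x y : Fin N → ℝ) : ℝ :=
  ∑ i, ∑ j, x i * A i j * y j

/-- `x` is a probability vector (a mixed strategy). -/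
def isProb {N : ℕ} (x : Fin N → ℝ) : Prop := (∀ i, 0 ≤ x i) ∧ ∑ i, x i = 1

lemma sum_pairs (K : ℕ) (f : Fin (2 * K) → ℝ) :
    ∑ i, f i = ∑ k : Fin K,
      (f ⟨2 * (k : ℕ), by have := k.isLt; linarith⟩ +
       f ⟨2 * (k : ℕ) + 1, by have := k.isLt; linarith⟩) := by
  let e : Fin K × Fin 2 → Fin (2 * K) := fun p =>
    ⟨2 * (p.1 : ℕ) + (p.2 : ℕ), by have := p.1.isLt; have := p.2.isLt; omega⟩
  have he : Function.Bijective e := by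
    constructor
    · rintro ⟨a, b⟩ ⟨c, d⟩ h
      have hb := b.isLt; have hd := d.isLt
      simp only [e, Fin.mk.injEq] at h
      have : (a : ℕ) = c ∧ (b : ℕ) = d := by omega
      exact Prod.ext (Fin.ext this.1) (Fin.ext this.2)
    · intro i
      refine ⟨(⟨(i : ℕ) / 2, by have := i.isLt; omega⟩, ⟨(i : ℕ) % 2, by omega⟩), ?_⟩
      simp only [e, Fin.ext_iff]
      omega
  have h1 := Fintype.sum_bijective e he (fun p => f (e p)) f (fun p => rfl)
  rw [← h1, Fintype.sum_prod_type]
  refine Finset.sum_congr rfl fun k _ => ?_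
  rw [Fin.sum_univ_two]
  congr 1

/-- In every Nash equilibrium of the Generalized Matching Pennies prototype `(A*, -A*)`
with `K` diagonal 2×2 blocks of `M > 0`, each pair of consecutive probabilities sums to
exactly `1/K`, for both players. -/
theorem matching_pennies_uniform_capacities (K : ℕ) (hK : 1 ≤ K) (M : ℝ) (hM : 0 < M)
    (Astar : Matrix (Fin (2 * K)) (Fin (2 * K)) ℝ)
    (hAstar : ∀ i j : Fin (2 * K),
      Astar i j = if (i : ℕ) / 2 = (j : ℕ) / 2 then M else 0)
    (x y : Fin (2 * K) → ℝ) (hx : isProb x) (hy : isProb y)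
    (hNash₁ : ∀ x' : Fin (2 * K) → ℝ, isProb x' → pay Astar x y ≥ pay Astar x' y)
    (hNash₂ : ∀ y' : Fin (2 * K) → ℝ, isProb y' → pay (-Astar) x y ≥ pay (-Astar) x y') :
    ∀ k : Fin K,
      x ⟨2 * (k : ℕ), by have := k.isLt; omega⟩ +
          x ⟨2 * (k : ℕ) + 1, by have := k.isLt; omega⟩ = 1 / (K : ℝ) ∧
      y ⟨2 * (k : ℕ), by have := k.isLt; omega⟩ +
          y ⟨2 * (k : ℕ) + 1, by have := k.isLt; omega⟩ = 1 / (K : ℝ) := by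
  have hK0 : (K : ℝ) ≠ 0 := Nat.cast_ne_zero.mpr (by omega)
  set v := pay Astar x y with hv
  set X : Fin K → ℝ := fun k =>
    x ⟨2 * (k : ℕ), by have := k.isLt; omega⟩ +
      x ⟨2 * (k : ℕ) + 1, by have := k.isLt; omega⟩ with hX
  set Y : Fin K → ℝ := fun k =>
    y ⟨2 * (k : ℕ), by have := k.isLt; omega⟩ +
      y ⟨2 * (k : ℕ) + 1, by have := k.isLt; omega⟩ with hY
  have hprob : ∀ i0 : Fin (2 * K), isProb (fun i => if i = i0 then (1 : ℝ) else 0) := by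
    intro i0
    constructor
    · intro i; dsimp only; split <;> norm_num
    · simp
  -- payoff against indicator row strategy
  have hpayx : ∀ i0 : Fin (2 * K),
      pay Astar (fun i => if i = i0 then (1 : ℝ) else 0) y = ∑ j, Astar i0 j * y j := by
    intro i0
    unfold pay
    rw [Finset.sum_eq_single i0]
    · simp
    · intro b _ hb; simp [hb]
    · simp
  -- payoff against indicator column strategy
  have hpayy : ∀ i0 : Fin (2 * K),
      pay Astar x (fun j => if j = i0 then (1 : ℝ) else 0) = ∑ i, x i * Astar i i0 := by
    intro i0
    unfold pay
    refine Finset.sum_congr rfl fun i _ => ?_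
    rw [Finset.sum_eq_single i0]
    · simp
    · intro b _ hb; simp [hb]
    · simp
  -- The row sum at block k
  have hsumY : ∀ k : Fin K,
      (∑ j, Astar ⟨2 * (k : ℕ), by have := k.isLt; omega⟩ j * y j) = M * Y k := by
    intro k
    rw [sum_pairs K]
    rw [Finset.sum_eq_single k]
    · simp only [hAstar, Fin.val_mk]
      rw [if_pos trivial, if_pos (by omega)]
      simp [hY]; ring
    · intro b _ hb
      have hkb : (b : ℕ) ≠ (k : ℕ) := fun h => hb (Fin.ext h)
      simp only [hAstar, Fin.val_mk]
      rw [if_neg (by omega), if_neg (by omega)]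
      ring
    · simp
  have hsumX : ∀ k : Fin K,
      (∑ i, x i * Astar i ⟨2 * (k : ℕ), by have := k.isLt; omega⟩) = M * X k := by
    intro k
    rw [sum_pairs K]
    rw [Finset.sum_eq_single k]
    · simp only [hAstar, Fin.val_mk]
      rw [if_pos trivial, if_pos (by omega)]
      simp [hX]; ring
    · intro b _ hb
      have hkb : (b : ℕ) ≠ (k : ℕ) := fun h => hb (Fin.ext h)
      simp only [hAstar, Fin.val_mk]
      rw [if_neg (by omega), if_neg (by omega)]
      ring
    · simp
  have hMY : ∀ k : Fin K, M * Y k ≤ v := by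
    intro k
    have h := hNash₁ _ (hprob ⟨2 * (k : ℕ), by have := k.isLt; omega⟩)
    rw [hpayx, hsumY k] at h
    exact h
  have hneg : ∀ y', pay (-Astar) x y' = - pay Astar x y' := by
    intro y'
    simp [pay, Matrix.neg_apply, mul_neg, neg_mul, Finset.sum_neg_distrib]
  have hMX : ∀ k : Fin K, v ≤ M * X k := by
    intro k
    have h := hNash₂ _ (hprob ⟨2 * (k : ℕ), by have := k.isLt; omega⟩)
    rw [hneg, hneg, hpayy, hsumX k] at h
    linarith
  have hXsum : ∑ k, X k = 1 := by rw [← sum_pairs K x]; exact hx.2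
  have hYsum : ∑ k, Y k = 1 := by rw [← sum_pairs K y]; exact hy.2
  have hKv1 : (K : ℝ) * v ≤ M := by
    have h1 : ∑ _k : Fin K, v ≤ ∑ k, M * X k :=
      Finset.sum_le_sum fun k _ => hMX k
    rw [← Finset.mul_sum, hXsum, mul_one] at h1
    simpa [Finset.sum_const, nsmul_eq_mul] using h1
  have hKv2 : M ≤ (K : ℝ) * v := by
    have h1 : ∑ k, M * Y k ≤ ∑ _k : Fin K, v :=
      Finset.sum_le_sum fun k _ => hMY k
    rw [← Finset.mul_sum, hYsum, mul_one] at h1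
    simpa [Finset.sum_const, nsmul_eq_mul] using h1
  have hveq : v = M / K := by
    have : (K : ℝ) * v = M := le_antisymm hKv1 hKv2
    field_simp [← this]
    linarith [mul_comm v (K : ℝ)]
  -- each X k = 1/K
  have hXk : ∀ k : Fin K, X k = 1 / K := by
    have hge : ∀ k : Fin K, (0 : ℝ) ≤ X k - 1 / K := by
      intro k
      have := hMX k
      rw [hveq] at this
      have h2 : M * (1 / K) ≤ M * X k := by
        rw [mul_one_div]; exact this
      have := (mul_le_mul_iff_right₀ hM).mp h2
      linarith
    have hzero : ∑ k, (X k - 1 / K) = 0 := by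
      rw [Finset.sum_sub_distrib, hXsum, Finset.sum_const, Finset.card_univ,
        Fintype.card_fin, nsmul_eq_mul, mul_one_div, div_self hK0, sub_self]
    intro k
    have := (Finset.sum_eq_zero_iff_of_nonneg (fun k _ => hge k)).mp hzero k
      (Finset.mem_univ k)
    linarith
  have hYk : ∀ k : Fin K, Y k = 1 / K := by
    have hge : ∀ k : Fin K, (0 : ℝ) ≤ 1 / K - Y k := by
      intro k
      have := hMY k
      rw [hveq] at this
      have h2 : M * Y k ≤ M * (1 / K) := by
        rw [mul_one_div]; exact this
      have := (mul_le_mul_iff_right₀ hM).mp h2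
      linarith
    have hzero : ∑ k, (1 / (K : ℝ) - Y k) = 0 := by
      rw [Finset.sum_sub_distrib, hYsum, Finset.sum_const, Finset.card_univ,
        Fintype.card_fin, nsmul_eq_mul, mul_one_div, div_self hK0, sub_self]
    intro k
    have := (Finset.sum_eq_zero_iff_of_nonneg (fun k _ => hge k)).mp hzero k
      (Finset.mem_univ k)
    linarith
  intro k
  exact ⟨hXk k, hYk k⟩
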